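/- For the Pierrehumbert vector fields X̂₁(q,p,u,v) = (sin p, 0, v·cos p, 0) and X̂₂(q,p,u,v) = (0, sin q, 0, u·cos q) on ℝ⁴, the 4×4 matrix with columns X̂₁, X̂₂, [X̂₁,X̂₂], [X̂₁,[X̂₁,X̂₂]] evaluated at the point (π/3, π/3, √2/2, √2/2) has determinant 27/128, and in particular these four vector fields together with the two iterated brackets span ℝ⁴ at that point. -/

import Mathlib

open Real

/-- The Lie bracket of vector fields on `ℝ⁴`: `[X,Y](x) = DY(x)·X(x) − DX(x)·Y(x)`. -/
noncomputable def lieBracketR4 (X Y : (Fin 4 → ℝ) → (Fin 4 → ℝ)) (x : Fin 4 → ℝ) :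
    Fin 4 → ℝ :=
  fderiv ℝ Y x (X x) - fderiv ℝ X x (Y x)

/-- Lifted Pierrehumbert horizontal shear: `X̂₁(q,p,u,v) = (sin p, 0, v cos p, 0)`. -/
noncomputable def pierreX1 (x : Fin 4 → ℝ) : Fin 4 → ℝ :=
  ![Real.sin (x 1), 0, x 3 * Real.cos (x 1), 0]

/-- Lifted Pierrehumbert vertical shear: `X̂₂(q,p,u,v) = (0, sin q, 0, u cos q)`. -/
noncomputable def pierreX2 (x : Fin 4 → ℝ) : Fin 4 → ℝ :=
  ![0, Real.sin (x 0), 0, x 2 * Real.cos (x 0)]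

/-- The point `(π/3, π/3, √2/2, √2/2)`. -/
noncomputable def pierrePt : Fin 4 → ℝ :=
  ![Real.pi / 3, Real.pi / 3, Real.sqrt 2 / 2, Real.sqrt 2 / 2]

open ContinuousLinearMap

noncomputable def D1 (x : Fin 4 → ℝ) : (Fin 4 → ℝ) →L[ℝ] (Fin 4 → ℝ) :=
  ContinuousLinearMap.pi ![Real.cos (x 1) • proj 1, 0,
    x 3 • ((-Real.sin (x 1)) • proj 1) + Real.cos (x 1) • proj 3, 0]

noncomputable def D2 (x : Fin 4 → ℝ) : (Fin 4 → ℝ) →L[ℝ] (Fin 4 → ℝ) :=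
  ContinuousLinearMap.pi ![0, Real.cos (x 0) • proj 0, 0,
    x 2 • ((-Real.sin (x 0)) • proj 0) + Real.cos (x 0) • proj 2]

lemma hX1 (x : Fin 4 → ℝ) : HasFDerivAt pierreX1 (D1 x) x := by
  have key : pierreX1 = fun x i => (![fun x => Real.sin (x 1), fun _ => 0,
      fun x => x 3 * Real.cos (x 1), fun _ => 0] : Fin 4 → (Fin 4 → ℝ) → ℝ) i x := by
    funext x i; fin_cases i <;> rfl
  rw [key]
  refine hasFDerivAt_pi.2 ?_
  intro i
  fin_cases i <;>
    simp only [Matrix.cons_val_zero, Matrix.cons_val_one, Matrix.head_cons, Fin.isValue,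
      Matrix.cons_val_two, Matrix.tail_cons, Matrix.cons_val_three, Fin.mk_one]
  · exact (hasFDerivAt_apply 1 x).sin
  · exact hasFDerivAt_const 0 x
  · exact (hasFDerivAt_apply 3 x).mul (hasFDerivAt_apply 1 x).cos
  · exact hasFDerivAt_const 0 x

lemma hX2 (x : Fin 4 → ℝ) : HasFDerivAt pierreX2 (D2 x) x := by
  have key : pierreX2 = fun x i => (![fun _ => 0, fun x => Real.sin (x 0),
      fun _ => 0, fun x => x 2 * Real.cos (x 0)] : Fin 4 → (Fin 4 → ℝ) → ℝ) i x := by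
    funext x i; fin_cases i <;> rfl
  rw [key]
  refine hasFDerivAt_pi.2 ?_
  intro i
  fin_cases i <;>
    simp only [Matrix.cons_val_zero, Matrix.cons_val_one, Matrix.head_cons, Fin.isValue,
      Matrix.cons_val_two, Matrix.tail_cons, Matrix.cons_val_three, Fin.mk_one]
  · exact hasFDerivAt_const 0 x
  · exact (hasFDerivAt_apply 0 x).sin
  · exact hasFDerivAt_const 0 x
  · exact (hasFDerivAt_apply 2 x).mul (hasFDerivAt_apply 0 x).cos

noncomputable def pierreB (x : Fin 4 → ℝ) : Fin 4 → ℝ :=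
  ![-(Real.cos (x 1) * Real.sin (x 0)),
    Real.cos (x 0) * Real.sin (x 1),
    x 3 * Real.sin (x 1) * Real.sin (x 0) - x 2 * (Real.cos (x 0) * Real.cos (x 1)),
    x 3 * (Real.cos (x 1) * Real.cos (x 0)) - x 2 * (Real.sin (x 0) * Real.sin (x 1))]

lemma bracket12 : lieBracketR4 pierreX1 pierreX2 = pierreB := by
  funext x i
  unfold lieBracketR4
  rw [(hX1 x).fderiv, (hX2 x).fderiv]
  fin_cases i <;>
    simp [D1, D2, pierreX1, pierreX2, pierreB, ContinuousLinearMap.pi_apply] <;> ring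

noncomputable def DB (x : Fin 4 → ℝ) : (Fin 4 → ℝ) →L[ℝ] (Fin 4 → ℝ) :=
  ContinuousLinearMap.pi
    ![-(Real.cos (x 1) • (Real.cos (x 0) • proj 0) +
        Real.sin (x 0) • ((-Real.sin (x 1)) • proj 1)),
      Real.cos (x 0) • (Real.cos (x 1) • proj 1) +
        Real.sin (x 1) • ((-Real.sin (x 0)) • proj 0),
      ((x 3 * Real.sin (x 1)) • (Real.cos (x 0) • proj 0) +
        Real.sin (x 0) • (x 3 • (Real.cos (x 1) • proj 1) + Real.sin (x 1) • proj 3)) -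
      (x 2 • (Real.cos (x 0) • ((-Real.sin (x 1)) • proj 1) +
        Real.cos (x 1) • ((-Real.sin (x 0)) • proj 0)) +
        (Real.cos (x 0) * Real.cos (x 1)) • proj 2),
      (x 3 • (Real.cos (x 1) • ((-Real.sin (x 0)) • proj 0) +
        Real.cos (x 0) • ((-Real.sin (x 1)) • proj 1)) +
        (Real.cos (x 1) * Real.cos (x 0)) • proj 3) -
      (x 2 • (Real.sin (x 0) • (Real.cos (x 1) • proj 1) +
        Real.sin (x 1) • (Real.cos (x 0) • proj 0)) +
        (Real.sin (x 0) * Real.sin (x 1)) • proj 2)]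

lemma hB (x : Fin 4 → ℝ) : HasFDerivAt pierreB (DB x) x := by
  have key : pierreB = fun x i => (![
      fun x : Fin 4 → ℝ => -(Real.cos (x 1) * Real.sin (x 0)),
      fun x : Fin 4 → ℝ => Real.cos (x 0) * Real.sin (x 1),
      fun x : Fin 4 → ℝ =>
        x 3 * Real.sin (x 1) * Real.sin (x 0) - x 2 * (Real.cos (x 0) * Real.cos (x 1)),
      fun x : Fin 4 → ℝ =>
        x 3 * (Real.cos (x 1) * Real.cos (x 0)) - x 2 * (Real.sin (x 0) * Real.sin (x 1))] :
      Fin 4 → (Fin 4 → ℝ) → ℝ) i x := by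
    funext x i; fin_cases i <;> rfl
  rw [key]
  refine hasFDerivAt_pi.2 ?_
  intro i
  fin_cases i <;>
    simp only [Matrix.cons_val_zero, Matrix.cons_val_one, Matrix.head_cons, Fin.isValue,
      Matrix.cons_val_two, Matrix.tail_cons, Matrix.cons_val_three, Fin.mk_one]
  · exact ((hasFDerivAt_apply 1 x).cos.mul (hasFDerivAt_apply 0 x).sin).neg
  · exact (hasFDerivAt_apply 0 x).cos.mul (hasFDerivAt_apply 1 x).sin
  · exact (((hasFDerivAt_apply 3 x).mul (hasFDerivAt_apply 1 x).sin).mul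
      (hasFDerivAt_apply 0 x).sin).sub
      ((hasFDerivAt_apply 2 x).mul ((hasFDerivAt_apply 0 x).cos.mul (hasFDerivAt_apply 1 x).cos))
  · exact ((hasFDerivAt_apply 3 x).mul ((hasFDerivAt_apply 1 x).cos.mul
      (hasFDerivAt_apply 0 x).cos)).sub
      ((hasFDerivAt_apply 2 x).mul ((hasFDerivAt_apply 0 x).sin.mul (hasFDerivAt_apply 1 x).sin))

lemma e1 : pierreX1 pierrePt = ![Real.sqrt 3 / 2, 0, Real.sqrt 2 / 4, 0] := by
  funext i
  fin_cases i <;>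
    simp [pierreX1, pierrePt, Real.sin_pi_div_three, Real.cos_pi_div_three] <;> ring

lemma e2 : pierreX2 pierrePt = ![0, Real.sqrt 3 / 2, 0, Real.sqrt 2 / 4] := by
  funext i
  fin_cases i <;>
    simp [pierreX2, pierrePt, Real.sin_pi_div_three, Real.cos_pi_div_three] <;> ring

lemma h3 : Real.sqrt 3 * Real.sqrt 3 = 3 := Real.mul_self_sqrt (by norm_num)
lemma h2 : Real.sqrt 2 * Real.sqrt 2 = 2 := Real.mul_self_sqrt (by norm_num)

lemma e3 : lieBracketR4 pierreX1 pierreX2 pierrePt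
    = ![-(Real.sqrt 3 / 4), Real.sqrt 3 / 4, Real.sqrt 2 / 4, -(Real.sqrt 2 / 4)] := by
  rw [bracket12]
  funext i
  fin_cases i <;>
    simp [pierreB, pierrePt, Real.sin_pi_div_three, Real.cos_pi_div_three] <;>
    nlinarith [h3, Real.sqrt_nonneg 2, Real.sqrt_nonneg 3]

set_option maxHeartbeats 2000000 in
lemma e4 : lieBracketR4 pierreX1 (lieBracketR4 pierreX1 pierreX2) pierrePt
    = ![-(Real.sqrt 3 / 4), -(3 * Real.sqrt 3 / 8), 5 * Real.sqrt 2 / 8,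
        -(9 * Real.sqrt 2 / 16)] := by
  rw [bracket12]
  unfold lieBracketR4
  rw [(hB pierrePt).fderiv, (hX1 pierrePt).fderiv]
  funext i
  fin_cases i <;>
    simp [DB, D1, pierreB, pierreX1, pierrePt, ContinuousLinearMap.pi_apply,
      Real.sin_pi_div_three, Real.cos_pi_div_three] <;>
    nlinarith [h3, h2, Real.sqrt_nonneg 2, Real.sqrt_nonneg 3]

lemma detFinFour (A : Matrix (Fin 4) (Fin 4) ℝ) : A.det =
    A 0 0 * (A 1 1 * (A 2 2 * A 3 3 - A 2 3 * A 3 2) - A 1 2 * (A 2 1 * A 3 3 - A 2 3 * A 3 1)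
      + A 1 3 * (A 2 1 * A 3 2 - A 2 2 * A 3 1))
    - A 0 1 * (A 1 0 * (A 2 2 * A 3 3 - A 2 3 * A 3 2) - A 1 2 * (A 2 0 * A 3 3 - A 2 3 * A 3 0)
      + A 1 3 * (A 2 0 * A 3 2 - A 2 2 * A 3 0))
    + A 0 2 * (A 1 0 * (A 2 1 * A 3 3 - A 2 3 * A 3 1) - A 1 1 * (A 2 0 * A 3 3 - A 2 3 * A 3 0)
      + A 1 3 * (A 2 0 * A 3 1 - A 2 1 * A 3 0))
    - A 0 3 * (A 1 0 * (A 2 1 * A 3 2 - A 2 2 * A 3 1) - A 1 1 * (A 2 0 * A 3 2 - A 2 2 * A 3 0)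
      + A 1 2 * (A 2 0 * A 3 1 - A 2 1 * A 3 0)) := by
  simp [Matrix.det_succ_row_zero, Fin.sum_univ_succ, Fin.succAbove,
    show (Fin.succ 2 : Fin 4) = 3 from rfl, show (Fin.castSucc 2 : Fin 4) = 2 from rfl,
    show ((1 : Fin 4) < Fin.succ 2) = True from by decide]
  ring

set_option maxHeartbeats 1000000 in
theorem pierrehumbert_hormander_determinant :
    (Matrix.of (fun i j : Fin 4 =>
        (![pierreX1 pierrePt, pierreX2 pierrePt,
           lieBracketR4 pierreX1 pierreX2 pierrePt,
           lieBracketR4 pierreX1 (lieBracketR4 pierreX1 pierreX2) pierrePt] j) i)).det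
      = 27 / 128 ∧
    Submodule.span ℝ
        ({pierreX1 pierrePt, pierreX2 pierrePt,
          lieBracketR4 pierreX1 pierreX2 pierrePt,
          lieBracketR4 pierreX1 (lieBracketR4 pierreX1 pierreX2) pierrePt} :
          Set (Fin 4 → ℝ)) = ⊤ := by
  have hdet : (Matrix.of (fun i j : Fin 4 =>
        (![pierreX1 pierrePt, pierreX2 pierrePt,
           lieBracketR4 pierreX1 pierreX2 pierrePt,
           lieBracketR4 pierreX1 (lieBracketR4 pierreX1 pierreX2) pierrePt] j) i)).det
      = 27 / 128 := by
    rw [detFinFour]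
    simp only [Matrix.of_apply, e1, e2, e3, e4, Matrix.cons_val_zero, Matrix.cons_val_one,
      Matrix.head_cons, Matrix.cons_val_two, Matrix.tail_cons, Matrix.cons_val_three]
    nlinarith [h2, h3, Real.sqrt_nonneg 2, Real.sqrt_nonneg 3]
  refine ⟨hdet, ?_⟩
  set M : Matrix (Fin 4) (Fin 4) ℝ := Matrix.of (fun i j : Fin 4 =>
        (![pierreX1 pierrePt, pierreX2 pierrePt,
           lieBracketR4 pierreX1 pierreX2 pierrePt,
           lieBracketR4 pierreX1 (lieBracketR4 pierreX1 pierreX2) pierrePt] j) i) with hM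
  have hu : IsUnit M.det := by rw [hdet]; norm_num
  have hsurj : Function.Surjective M.mulVec := Matrix.mulVec_surjective_iff_isUnit.2 ((Matrix.isUnit_iff_isUnit_det M).2 hu)
  have hrange : LinearMap.range M.mulVecLin = ⊤ := LinearMap.range_eq_top.2 hsurj
  rw [Matrix.range_mulVecLin] at hrange
  have hMT : Set.range M.transpose = ({pierreX1 pierrePt, pierreX2 pierrePt,
          lieBracketR4 pierreX1 pierreX2 pierrePt,
          lieBracketR4 pierreX1 (lieBracketR4 pierreX1 pierreX2) pierrePt} :
          Set (Fin 4 → ℝ)) := by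
    have : M.transpose = ![pierreX1 pierrePt, pierreX2 pierrePt,
          lieBracketR4 pierreX1 pierreX2 pierrePt,
          lieBracketR4 pierreX1 (lieBracketR4 pierreX1 pierreX2) pierrePt] := by
      funext j i
      fin_cases j <;> rfl
    rw [this]
    ext v
    simp only [Matrix.range_cons, Matrix.range_cons_empty, Set.mem_union, Set.mem_singleton_iff,
      Set.mem_insert_iff, Set.range_eq_empty, Set.mem_empty_iff_false]
    tauto
  change Submodule.span ℝ (Set.range M.transpose) = ⊤ at hrange
  rw [hMT] at hrange
  exact hrange
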